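/- arXiv:0810.0776 — 2 statements merged into one kernel-verified Lean document; each statement's English description precedes it below -/
import Mathlib

section
/- Let h : ℝⁿ → ℝ be continuous and x : [0, T] → ℝⁿ be absolutely continuous with the map t ↦ h(x(t)) absolutely continuous. Suppose ε̂ < b, h(x(0)) ≤ ε̂, and whenever ε̂ < h(x(t)) < b and (d/dt)h(x(t)) exists, (d/dt)h(x(t)) ≤ 0. Then h(x(t)) ≤ ε̂ for all t ∈ [0, T]. -/
open MeasureTheory

/-- Positive invariance of the sublevel set `{h ≤ ε̂}`: if `g(t) = h(x(t))` is absolutely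
continuous (expressed via the integral identity), starts at or below `ε̂ < b`, and cannot
increase while strictly between `ε̂` and `b`, then it stays at or below `ε̂` on `[0,T]`. -/
theorem stmt_1 {n : ℕ} (h : (Fin n → ℝ) → ℝ) (hh : Continuous h)
    (T εhat b : ℝ) (hT : 0 ≤ T) (hεb : εhat < b)
    (x : ℝ → Fin n → ℝ) (hx : ContinuousOn x (Set.Icc 0 T))
    (g' : ℝ → ℝ)
    (hint : ∀ t ∈ Set.Icc (0:ℝ) T, IntervalIntegrable g' volume 0 t)
    (hac : ∀ t ∈ Set.Icc (0:ℝ) T, h (x t) = h (x 0) + ∫ s in (0:ℝ)..t, g' s)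
    (h0 : h (x 0) ≤ εhat)
    (hder : ∀ᵐ t ∂volume, t ∈ Set.Icc (0:ℝ) T →
      (εhat < h (x t) ∧ h (x t) < b) → g' t ≤ 0) :
    ∀ t ∈ Set.Icc (0:ℝ) T, h (x t) ≤ εhat := by
  by_contra hcon
  push_neg at hcon
  obtain ⟨t₁, ht₁, hgt₁⟩ := hcon
  set g : ℝ → ℝ := fun t => h (x t) with hgdef
  have hgc : ContinuousOn g (Set.Icc 0 T) := hh.comp_continuousOn hx
  obtain ⟨ht₁0, ht₁T⟩ := ht₁
  set ε' : ℝ := min (g t₁) ((εhat + b) / 2) with hε'def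
  have hε'1 : εhat < ε' := lt_min hgt₁ (by linarith)
  have hε'2 : ε' < b := lt_of_le_of_lt (min_le_right _ _) (by linarith)
  have hsub1 : Set.Icc 0 t₁ ⊆ Set.Icc 0 T := Set.Icc_subset_Icc le_rfl ht₁T
  -- the set of times in [0, t₁] where g ≤ εhat
  set S : Set ℝ := Set.Icc 0 t₁ ∩ g ⁻¹' Set.Iic εhat with hSdef
  have hSclosed : IsClosed S :=
    ContinuousOn.preimage_isClosed_of_isClosed (hgc.mono hsub1) isClosed_Icc isClosed_Iic
  have hScomp : IsCompact S :=
    isCompact_Icc.of_isClosed_subset hSclosed Set.inter_subset_left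
  have hSne : S.Nonempty := ⟨0, Set.mem_Icc.2 ⟨le_rfl, ht₁0⟩, h0⟩
  set t₀ : ℝ := sSup S with ht₀def
  have ht₀S : t₀ ∈ S := hScomp.sSup_mem hSne
  obtain ⟨ht₀mem, ht₀le⟩ := ht₀S
  have ht₀0 : (0:ℝ) ≤ t₀ := ht₀mem.1
  have ht₀t₁ : t₀ ≤ t₁ := ht₀mem.2
  -- beyond t₀, g stays above εhat
  have hgt_after : ∀ s, t₀ < s → s ≤ t₁ → εhat < g s := by
    intro s hs1 hs2
    by_contra hle
    push_neg at hle
    have : s ∈ S := ⟨⟨le_trans ht₀0 hs1.le, hs2⟩, hle⟩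
    exact absurd (le_csSup hScomp.bddAbove this) (not_le.2 hs1)
  -- first time in [t₀, t₁] where g reaches ε'
  set S₂ : Set ℝ := Set.Icc t₀ t₁ ∩ g ⁻¹' Set.Ici ε' with hS₂def
  have hsub2 : Set.Icc t₀ t₁ ⊆ Set.Icc 0 T := Set.Icc_subset_Icc ht₀0 ht₁T
  have hS₂closed : IsClosed S₂ :=
    ContinuousOn.preimage_isClosed_of_isClosed (hgc.mono hsub2) isClosed_Icc isClosed_Ici
  have hS₂comp : IsCompact S₂ :=
    isCompact_Icc.of_isClosed_subset hS₂closed Set.inter_subset_left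
  have hS₂ne : S₂.Nonempty := ⟨t₁, Set.mem_Icc.2 ⟨ht₀t₁, le_rfl⟩, by simp only [Set.mem_preimage, Set.mem_Ici, hε'def]; exact min_le_left _ _⟩
  set t₂ : ℝ := sInf S₂ with ht₂def
  have ht₂S : t₂ ∈ S₂ := hS₂comp.sInf_mem hS₂ne
  obtain ⟨ht₂mem, ht₂ge⟩ := ht₂S
  have ht₂0 : t₀ ≤ t₂ := ht₂mem.1
  have ht₂t₁ : t₂ ≤ t₁ := ht₂mem.2
  have ht₂T : t₂ ∈ Set.Icc (0:ℝ) T := ⟨le_trans ht₀0 ht₂0, le_trans ht₂t₁ ht₁T⟩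
  have ht₀T : t₀ ∈ Set.Icc (0:ℝ) T := ⟨ht₀0, le_trans ht₀t₁ ht₁T⟩
  -- before t₂, g stays below ε'
  have hlt_before : ∀ s, t₀ ≤ s → s < t₂ → g s < ε' := by
    intro s hs1 hs2
    by_contra hle
    push_neg at hle
    have : s ∈ S₂ := ⟨⟨hs1, le_trans hs2.le ht₂t₁⟩, hle⟩
    exact absurd (csInf_le hS₂comp.bddBelow this) (not_le.2 hs2)
  -- the integral identity on [t₀, t₂]
  have hkey : g t₂ - g t₀ = ∫ s in t₀..t₂, g' s := by
    have h2 := hac t₂ ht₂T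
    have h1 := hac t₀ ht₀T
    have := intervalIntegral.integral_interval_sub_left (hint t₂ ht₂T) (hint t₀ ht₀T)
    simp only [hgdef] at *
    rw [h2, h1]
    linarith [this]
  -- a.e. on (t₀, t₂], g' ≤ 0
  have hae : ∀ᵐ s ∂(volume.restrict (Set.Icc t₀ t₂)), 0 ≤ (fun u => -g' u) s := by
    rw [Measure.restrict_congr_set MeasureTheory.Ioo_ae_eq_Icc.symm]
    rw [ae_restrict_iff' measurableSet_Ioo]
    filter_upwards [hder] with s hs hsmem
    obtain ⟨hs1, hs2⟩ := hsmem
    have hsT : s ∈ Set.Icc (0:ℝ) T :=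
      ⟨le_trans ht₀0 hs1.le, le_trans hs2.le ht₂T.2⟩
    have hband1 : εhat < g s := hgt_after s hs1 (le_trans hs2.le ht₂t₁)
    have hband2 : g s < b := lt_trans (hlt_before s hs1.le hs2) hε'2
    simp only [neg_nonneg]
    exact hs hsT ⟨hband1, hband2⟩
  have hint' : 0 ≤ ∫ s in t₀..t₂, -g' s :=
    intervalIntegral.integral_nonneg_of_ae_restrict ht₂0 hae
  rw [intervalIntegral.integral_neg] at hint'
  have : g t₂ ≤ g t₀ := by linarith [hkey, hint']
  have : ε' ≤ εhat := le_trans ht₂ge (le_trans this ht₀le)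
  linarith
end

section
/- Consider ẋ₁ = γ̃(x₁)(1 - exp(x₂)) type coupling: specifically, for the system (3.5) with a = b = m = 0, the feedback k(x) := -D_s + μ̃(x₁)·exp(x₂)·φ(x₁) with φ : ℝ → ℝ⁺ locally Lipschitz, φ(0) = 1, φ(x) < 1 for x > 0, φ(x) > 1 for x < 0, yields for V(x) = γ(x₁) + β(x₂) (with γ, β satisfying the monotonicity conditions x γ'(x) > 0, x β'(x) > 0 for x ≠ 0): V̇ = γ'(x₁)(c·exp(-x₁)+1)·μ̃(x₁)·exp(x₂)·(φ(x₁) - 1) + β'(x₂)·μ̃(x₁)·(1 - exp(x₂)) < 0 for all x ≠ 0. -/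
lemma aux_A_neg {g p m e f : ℝ} (hp : 0 < p) (hm : 0 < m) (he : 0 < e)
    (h : g * f < 0 ∧ (0 < g ∨ g < 0)) : g * p * m * e * f < 0 := by
  obtain ⟨hgf, hg⟩ := h
  rcases hg with hg | hg
  · have hf : f < 0 := by nlinarith
    exact mul_neg_of_pos_of_neg (by positivity) hf
  · have hf : 0 < f := by nlinarith
    have : g * p * m * e < 0 := by
      have h1 : g * p < 0 := mul_neg_of_neg_of_pos hg hp
      have h2 : g * p * m < 0 := mul_neg_of_neg_of_pos h1 hm
      exact mul_neg_of_neg_of_pos h2 he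
    exact mul_neg_of_neg_of_pos this hf

lemma aux_B_neg {b m e : ℝ} (hm : 0 < m)
    (h : b * e < 0 ∧ (0 < b ∨ b < 0)) : b * m * e < 0 := by
  obtain ⟨hbe, hb⟩ := h
  rcases hb with hb | hb
  · have he : e < 0 := by nlinarith
    exact mul_neg_of_pos_of_neg (by positivity) he
  · have he : 0 < e := by nlinarith
    exact mul_neg_of_neg_of_pos (mul_neg_of_neg_of_pos hb hm) he

/-- For system (3.5) with the feedback `k(x) = -D_s + μ̃(x₁) e^{x₂} φ(x₁)`, the derivative of
`V(x) = γ(x₁) + β(x₂)` satisfies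
`V̇ = γ'(x₁)(c e^{-x₁}+1) μ̃(x₁) e^{x₂} (φ(x₁)-1) + β'(x₂) μ̃(x₁)(1-e^{x₂}) < 0` for `x ≠ 0`. -/
theorem stmt_14 (c Ds μmax : ℝ) (hc : 0 < c) (hDs : 0 < Ds)
    (μt : ℝ → ℝ) (hμtc : Continuous μt)
    (hμtpos : ∀ x, 0 < μt x) (hμtb : ∀ x, μt x ≤ μmax)
    (φ : ℝ → ℝ) (hφ : LocallyLipschitz φ) (hφpos : ∀ x, 0 ≤ φ x)
    (hφ0 : φ 0 = 1) (hφlt : ∀ x : ℝ, 0 < x → φ x < 1) (hφgt : ∀ x : ℝ, x < 0 → 1 < φ x)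
    (γ β : ℝ → ℝ) (γ' β' : ℝ → ℝ)
    (hγd : ∀ x, HasDerivAt γ (γ' x) x) (hβd : ∀ x, HasDerivAt β (β' x) x)
    (hγ' : ∀ x : ℝ, x ≠ 0 → 0 < x * γ' x) (hβ' : ∀ x : ℝ, x ≠ 0 → 0 < x * β' x) :
    ∀ x1 x2 : ℝ, (x1, x2) ≠ ((0 : ℝ), (0 : ℝ)) →
      γ' x1 * (c * Real.exp (-x1) + 1) * μt x1 * Real.exp x2 * (φ x1 - 1) +
        β' x2 * μt x1 * (1 - Real.exp x2) < 0 := by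
  intro x1 x2 hx
  have hpos : 0 < c * Real.exp (-x1) + 1 := by positivity
  have hμ := hμtpos x1
  have hex2 := Real.exp_pos x2
  have keyA : x1 ≠ 0 →
      γ' x1 * (φ x1 - 1) < 0 ∧ (0 < γ' x1 ∨ γ' x1 < 0) := by
    intro h1
    rcases lt_or_gt_of_ne h1 with h | h
    · have hγ : γ' x1 < 0 := by nlinarith [hγ' x1 (ne_of_lt h)]
      have := hφgt x1 h
      constructor
      · nlinarith
      · right; exact hγ
    · have hγ : 0 < γ' x1 := by nlinarith [hγ' x1 (ne_of_gt h)]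
      have := hφlt x1 h
      constructor
      · nlinarith
      · left; exact hγ
  have keyB : x2 ≠ 0 →
      β' x2 * (1 - Real.exp x2) < 0 ∧ (0 < β' x2 ∨ β' x2 < 0) := by
    intro h2
    rcases lt_or_gt_of_ne h2 with h | h
    · have hβ : β' x2 < 0 := by nlinarith [hβ' x2 (ne_of_lt h)]
      have he : Real.exp x2 < 1 := Real.exp_lt_one_iff.mpr h
      exact ⟨by nlinarith, Or.inr hβ⟩
    · have hβ : 0 < β' x2 := by nlinarith [hβ' x2 (ne_of_gt h)]
      have he : 1 < Real.exp x2 := by nlinarith [Real.add_one_le_exp x2]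
      exact ⟨by nlinarith, Or.inl hβ⟩
  rcases ne_or_eq x1 0 with h1 | h1
  · have hA := aux_A_neg (g := γ' x1) (f := φ x1 - 1) hpos hμ hex2 (keyA h1)
    rcases ne_or_eq x2 0 with h2 | h2
    · have hB := aux_B_neg (b := β' x2) (e := 1 - Real.exp x2) hμ (keyB h2)
      linarith
    · have hB0 : β' x2 * μt x1 * (1 - Real.exp x2) = 0 := by
        simp [h2]
      linarith
  · have h2 : x2 ≠ 0 := fun h2 => hx (by simp [h1, h2])
    have hA0 : γ' x1 * (c * Real.exp (-x1) + 1) * μt x1 * Real.exp x2 * (φ x1 - 1) = 0 := by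
      simp [h1, hφ0]
    have hB := aux_B_neg (b := β' x2) (e := 1 - Real.exp x2) hμ (keyB h2)
    linarith
end
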